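/- Consider the linear ODE system I'(t) = 1 − I(t) − L·I(t), A'(t) = L·I(t) − A(t) with L ≥ 0 a fixed constant. For any initial conditions I(0), A(0), the solution satisfies I(t) → 1/(1+L) and A(t) → L/(1+L) as t → ∞. -/

import Mathlib

open Filter

/-- If `f' = -k f` then `f t = f 0 * exp (-(k*t))`. -/
lemma ode_decay_formula {k : ℝ} {f : ℝ → ℝ}
    (hf : ∀ t : ℝ, HasDerivAt f (-(k * f t)) t) :
    ∀ t : ℝ, f t = f 0 * Real.exp (-(k * t)) := by
  have hg : ∀ t : ℝ, HasDerivAt (fun t => f t * Real.exp (k * t)) 0 t := by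
    intro t
    have he : HasDerivAt (fun t : ℝ => Real.exp (k * t)) (Real.exp (k * t) * k) t := by
      simpa using ((hasDerivAt_id t).const_mul k).exp
    have := (hf t).mul he
    exact this.congr_deriv (by ring)
  have hconst : ∀ t : ℝ, f t * Real.exp (k * t) = f 0 * Real.exp (k * 0) := by
    intro t
    have : ∀ x : ℝ, deriv (fun t => f t * Real.exp (k * t)) x = 0 :=
      fun x => (hg x).deriv
    have hdiff : Differentiable ℝ (fun t => f t * Real.exp (k * t)) :=
      fun x => (hg x).differentiableAt
    exact is_const_of_deriv_eq_zero hdiff this t 0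
  intro t
  have h := hconst t
  simp only [mul_zero, Real.exp_zero, mul_one] at h
  have hpos := Real.exp_pos (k * t)
  rw [Real.exp_neg, ← h, mul_inv_cancel_right₀ hpos.ne']

lemma ode_decay_tendsto {k : ℝ} (hk : 0 < k) {f : ℝ → ℝ}
    (hf : ∀ t : ℝ, HasDerivAt f (-(k * f t)) t) :
    Tendsto f atTop (nhds 0) := by
  have hform := ode_decay_formula hf
  have h1 : Tendsto (fun t : ℝ => f 0 * Real.exp (-(k * t))) atTop (nhds (f 0 * 0)) := by
    apply Tendsto.const_mul
    have : Tendsto (fun t : ℝ => k * t) atTop atTop :=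
      Tendsto.const_mul_atTop hk tendsto_id
    exact (Real.tendsto_exp_neg_atTop_nhds_zero.comp this)
  rw [mul_zero] at h1
  exact h1.congr (fun t => (hform t).symm)

theorem receptor_CRN_stabilizes (L : ℝ) (hL : 0 ≤ L) (I A : ℝ → ℝ)
    (hI : ∀ t : ℝ, HasDerivAt I (1 - I t - L * I t) t)
    (hA : ∀ t : ℝ, HasDerivAt A (L * I t - A t) t) :
    Tendsto I atTop (nhds (1 / (1 + L))) ∧
    Tendsto A atTop (nhds (L / (1 + L))) := by
  have hL1 : (0:ℝ) < 1 + L := by linarith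
  have hL1' : (1:ℝ) + L ≠ 0 := ne_of_gt hL1
  set c : ℝ := I 0 - 1 / (1 + L) with hc
  -- J = I - 1/(1+L) satisfies J' = -(1+L) J
  have hJ : ∀ t : ℝ, HasDerivAt (fun t => I t - 1 / (1 + L))
      (-((1 + L) * ((fun t => I t - 1 / (1 + L)) t))) t := by
    intro t
    have := (hI t).sub_const (1 / (1 + L))
    refine this.congr_deriv ?_
    beta_reduce
    rw [mul_sub, mul_one_div_cancel hL1']
    ring
  have hJform := ode_decay_formula hJ
  have hJ0 : (fun t => I t - 1 / (1 + L)) 0 = c := by simp [hc]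
  have hIform : ∀ t : ℝ, I t = 1 / (1 + L) + c * Real.exp (-((1 + L) * t)) := by
    intro t
    have h := hJform t
    simp only [hc]
    linarith
  have hItend : Tendsto I atTop (nhds (1 / (1 + L))) := by
    have := ode_decay_tendsto hL1 hJ
    have h2 : Tendsto (fun t => (I t - 1 / (1 + L)) + 1 / (1 + L)) atTop
        (nhds (0 + 1 / (1 + L))) := this.add_const _
    rw [zero_add] at h2
    exact h2.congr (fun t => by ring)
  refine ⟨hItend, ?_⟩
  -- B = A - L/(1+L) + c * exp(-(1+L)t) satisfies B' = -B
  have hB : ∀ t : ℝ, HasDerivAt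
      (fun t => A t - L / (1 + L) + c * Real.exp (-((1 + L) * t)))
      (-(1 * ((fun t => A t - L / (1 + L) + c * Real.exp (-((1 + L) * t))) t))) t := by
    intro t
    have h0 : HasDerivAt (fun t : ℝ => -((1 + L) * t)) (-(1 + L)) t := by
      exact (((hasDerivAt_id t).const_mul (1 + L)).neg).congr_deriv (by ring)
    have he : HasDerivAt (fun t : ℝ => Real.exp (-((1 + L) * t)))
        (Real.exp (-((1 + L) * t)) * (-(1 + L))) t := h0.exp
    have h := ((hA t).sub_const (L / (1 + L))).add (he.const_mul c)
    refine h.congr_deriv ?_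
    beta_reduce
    rw [hIform t]
    field_simp
    ring
  have hBtend := ode_decay_tendsto one_pos hB
  -- A t = L/(1+L) + B t - c * exp(-(1+L)t)
  have hexp : Tendsto (fun t : ℝ => c * Real.exp (-((1 + L) * t))) atTop (nhds 0) := by
    have : Tendsto (fun t : ℝ => (1 + L) * t) atTop atTop :=
      Tendsto.const_mul_atTop hL1 tendsto_id
    have h2 := (Real.tendsto_exp_neg_atTop_nhds_zero.comp this).const_mul c
    simpa using h2
  have := (hBtend.sub hexp).add_const (L / (1 + L))
  rw [sub_zero, zero_add] at this
  exact this.congr (fun t => by ring)
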